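/- The local BP operator R is antitone for the upshifted likelihood-ratio order: if m¹ and m² are collections of finitely supported probability distributions on ℕ with 0 in their supports and m¹_i ≤_{lr↑} m²_i for each i, then R[m²] ≤_{lr↑} R[m¹], where R[m](x) = 1(x ≤ c)·Σ_{|y| ≤ b−x} Π_i m_i(y_i) / Σ_{t ≤ c} Σ_{|y| ≤ b−t} Π_i m_i(y_i) for fixed integers b, c ≥ 0. -/

import Mathlib

/-- `p` is a finitely supported probability distribution on ℕ. -/
def IsDist (p : ℕ → ℝ) : Prop :=
  (∀ x, 0 ≤ p x) ∧ (Function.support p).Finite ∧ ∑' x, p x = 1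

/-- Upshifted likelihood-ratio order. -/
def LRup (p q : ℕ → ℝ) : Prop :=
  ∀ i k l : ℕ, p (i + k + l) * q i ≤ p (i + l) * q (i + k)

/-- Numerator of the BP operator. -/
noncomputable def Rnum {ι : Type*} [Fintype ι] (b : ℕ) (m : ι → ℕ → ℝ) (x : ℕ) : ℝ :=
  ∑' y : ι → ℕ, if (∑ i, y i) + x ≤ b then ∏ i, m i (y i) else 0

/-- The local BP operator with vertex capacity `b` and edge capacity `c`. -/
noncomputable def Rop {ι : Type*} [Fintype ι] (b c : ℕ) (m : ι → ℕ → ℝ) (x : ℕ) : ℝ :=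
  (if x ≤ c then Rnum b m x else 0) / ∑ t ∈ Finset.range (c + 1), Rnum b m t

namespace RopAux
open Finset

def LZ (f g : ℤ → ℝ) : Prop := ∀ x y k : ℤ, 0 ≤ k → k ≤ x - y → f x * g y ≤ f (x-k) * g (y+k)
def Nn (f : ℤ → ℝ) : Prop := ∀ x, 0 ≤ f x
def Zn (f : ℤ → ℝ) : Prop := ∀ x : ℤ, x < 0 → f x = 0

noncomputable def M (f g : ℤ → ℝ) (x y : ℤ) : ℝ := f (max x y) * g (min x y)
noncomputable def J (f g : ℤ → ℝ) (x y : ℤ) : ℝ := f x * g y - M f g x y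
noncomputable def convZ (f F : ℤ → ℝ) (z : ℤ) : ℝ := ∑ k ∈ Finset.Icc 0 z, f k * F (z - k)
noncomputable def T (φ ψ : ℤ → ℤ → ℝ) (X Y : ℤ) : ℝ :=
  ∑ p ∈ Finset.Icc (0:ℤ) X ×ˢ Finset.Icc (0:ℤ) Y, φ p.1 p.2 * ψ (X - p.1) (Y - p.2)
def Vq (φ : ℤ → ℤ → ℝ) : Prop := ∀ x y : ℤ, x < 0 ∨ y < 0 → φ x y = 0

section basic
variable {f g : ℤ → ℝ}

lemma M_symm (x y : ℤ) : M f g x y = M f g y x := by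
  unfold M; rw [max_comm, min_comm]

lemma M_nonneg (hf : Nn f) (hg : Nn g) (x y : ℤ) : 0 ≤ M f g x y :=
  mul_nonneg (hf _) (hg _)

lemma M_zero (hg : Zn g) {x y : ℤ} (h : x < 0 ∨ y < 0) : M f g x y = 0 := by
  unfold M
  have : min x y < 0 := by rcases h with h | h <;> [exact lt_of_le_of_lt (min_le_left _ _) h; exact lt_of_le_of_lt (min_le_right _ _) h]
  rw [hg _ this, mul_zero]

lemma J_zero_of_le {x y : ℤ} (h : y ≤ x) : J f g x y = 0 := by
  unfold J M
  rw [max_eq_left h, min_eq_right h, sub_self]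

lemma J_zero (hf : Zn f) (hg : Zn g) {x y : ℤ} (h : x < 0 ∨ y < 0) : J f g x y = 0 := by
  rcases le_or_gt y x with hyx | hyx
  · exact J_zero_of_le hyx
  · unfold J M
    rw [max_eq_right hyx.le, min_eq_left hyx.le]
    rcases h with h | h
    · rw [hf _ h, zero_mul, hg _ h, mul_zero, sub_self]
    · have : x < 0 := hyx.trans h
      rw [hf _ this, zero_mul, hg _ this, mul_zero, sub_self]

lemma J_nonneg (hfg : LZ f g) (x y : ℤ) : 0 ≤ J f g x y := by
  rcases le_or_gt y x with hyx | hyx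
  · rw [J_zero_of_le hyx]
  · unfold J M
    rw [max_eq_right hyx.le, min_eq_left hyx.le, sub_nonneg]
    have := hfg y x (y - x) (by omega) (by omega)
    simpa using this

/-- factorization -/
lemma MJ_eq (x y : ℤ) : f x * g y = M f g x y + J f g x y := by unfold J; ring

/-- unimodality of M on antidiagonals -/
lemma M_le_M (hfg : LZ f g) {x y x' y' : ℤ} (h0 : y ≤ x) (h1 : x + y = x' + y')
    (h2 : x' - y' ≤ x - y) (h3 : y' - x' ≤ x - y) : M f g x y ≤ M f g x' y' := by
  set a' := max x' y'
  set b' := min x' y'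
  have hab : a' + b' = x + y := by simp only [a', b']; omega
  have hab2 : a' - b' ≤ x - y := by simp only [a', b']; omega
  have hk0 : 0 ≤ b' - y := by simp only [b'] at *; omega
  have hk1 : b' - y ≤ x - y := by simp only [a', b'] at *; omega
  have := hfg x y (b' - y) hk0 hk1
  unfold M
  rw [max_eq_left h0, min_eq_right h0]
  have e1 : x - (b' - y) = a' := by omega
  have e2 : y + (b' - y) = b' := by omega
  rw [e1, e2] at this
  exact this

end basic

lemma T_eq_box {φ ψ : ℤ → ℤ → ℝ} (hφ : Vq φ) (hψ : Vq ψ) (X Y : ℤ)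
    {B : Finset (ℤ × ℤ)} (hB : Finset.Icc (0:ℤ) X ×ˢ Finset.Icc (0:ℤ) Y ⊆ B) :
    T φ ψ X Y = ∑ p ∈ B, φ p.1 p.2 * ψ (X - p.1) (Y - p.2) := by
  apply Finset.sum_subset hB
  intro p hp hnp
  simp only [Finset.mem_product, Finset.mem_Icc] at hnp
  rcases p with ⟨a, c⟩
  simp only at hnp ⊢
  by_cases h1 : 0 ≤ a ∧ 0 ≤ c
  · -- then a > X or c > Y
    have : X < a ∨ Y < c := by omega
    have : ψ (X - a) (Y - c) = 0 := hψ _ _ (by omega)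
    rw [this, mul_zero]
  · have : φ a c = 0 := hφ _ _ (by omega)
    rw [this, zero_mul]



lemma M_Vq {f g : ℤ → ℝ} (hf : Zn f) (hg : Zn g) : Vq (M f g) := fun x y h => M_zero hg h

lemma J_Vq {f g : ℤ → ℝ} (hf : Zn f) (hg : Zn g) : Vq (J f g) := fun x y h => J_zero hf hg h

section step
variable {f g u v : ℤ → ℝ}

lemma T_step (hf : Nn f) (hg : Nn g) (hu : Nn u) (hv : Nn v)
    (hzf : Zn f) (hzg : Zn g) (hzu : Zn u) (hzv : Zn v)
    (hfg : LZ f g) (huv : LZ u v) {X Y : ℤ} (hY : 0 ≤ Y) (hXY : Y + 1 ≤ X) :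
    T (M f g) (M u v) X Y ≤ T (M f g) (M u v) (X-1) (Y+1) := by
  set D : ℤ := X - 1 - Y with hD
  have hD0 : 0 ≤ D := by omega
  set B : Finset (ℤ × ℤ) := Finset.Icc (0:ℤ) (X+Y+D) ×ˢ Finset.Icc (-D) (X+Y) with hBdef
  -- the involution
  set σ : ℤ × ℤ → ℤ × ℤ := fun p => (p.2 + D, p.1 - D) with hσ
  have hσB : ∀ p ∈ B, σ p ∈ B := by
    intro p hp
    simp only [hBdef, hσ, Finset.mem_product, Finset.mem_Icc] at hp ⊢
    omega
  have hσσ : ∀ p : ℤ × ℤ, σ (σ p) = p := by intro p; simp [hσ]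
  -- sign lemma
  have key : ∀ p ∈ B, 0 ≤ (M f g p.1 p.2 - M f g (p.2 + D) (p.1 - D)) *
      (M u v (X-1-p.1) (Y+1-p.2) - M u v (X-p.1) (Y-p.2)) := by
    rintro ⟨a, c⟩ _
    simp only
    rcases le_or_gt (a - c) D with he | he
    · have h1 : M f g (c + D) (a - D) ≤ M f g a c := by
        rcases le_or_gt (a - D) (c + D) with hs | hs
        · exact M_le_M hfg hs (by omega) (by omega) (by omega)
        · rw [M_symm (c+D)]; exact M_le_M hfg hs.le (by omega) (by omega) (by omega)
      have h2 : M u v (X-a) (Y-c) ≤ M u v (X-1-a) (Y+1-c) := by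
        have h0 : Y - c ≤ X - a := by omega
        exact M_le_M huv h0 (by omega) (by omega) (by omega)
      exact mul_nonneg (by linarith) (by linarith)
    · have h1 : M f g a c ≤ M f g (c + D) (a - D) := by
        exact M_le_M hfg (by omega) (by omega) (by omega) (by omega)
      have h2 : M u v (X-1-a) (Y+1-c) ≤ M u v (X-a) (Y-c) := by
        rw [M_symm (X-1-a)]
        exact M_le_M huv (by omega) (by omega) (by omega) (by omega)
      nlinarith [h1, h2]
  have hsum : 0 ≤ ∑ p ∈ B, ((M f g p.1 p.2 - M f g (p.2 + D) (p.1 - D)) *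
      (M u v (X-1-p.1) (Y+1-p.2) - M u v (X-p.1) (Y-p.2))) := Finset.sum_nonneg key
  -- reindexing identities
  have r1 : ∑ p ∈ B, M f g (p.2 + D) (p.1 - D) * M u v (X-1-p.1) (Y+1-p.2)
      = ∑ p ∈ B, M f g p.1 p.2 * M u v (X-p.1) (Y-p.2) := by
    refine Finset.sum_nbij' σ σ hσB hσB (fun p _ => hσσ p) (fun p _ => hσσ p) ?_
    rintro ⟨a, c⟩ _
    simp only [hσ]
    rw [show X - (c + D) = Y + 1 - c by omega, show Y - (a - D) = X - 1 - a by omega,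
      M_symm (Y + 1 - c)]
  have r2 : ∑ p ∈ B, M f g (p.2 + D) (p.1 - D) * M u v (X-p.1) (Y-p.2)
      = ∑ p ∈ B, M f g p.1 p.2 * M u v (X-1-p.1) (Y+1-p.2) := by
    refine Finset.sum_nbij' σ σ hσB hσB (fun p _ => hσσ p) (fun p _ => hσσ p) ?_
    rintro ⟨a, c⟩ _
    simp only [hσ]
    rw [show X - 1 - (c + D) = Y - c by omega, show Y + 1 - (a - D) = X - a by omega,
      M_symm (Y - c)]
  -- expand the sum
  have expand : ∑ p ∈ B, ((M f g p.1 p.2 - M f g (p.2 + D) (p.1 - D)) *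
      (M u v (X-1-p.1) (Y+1-p.2) - M u v (X-p.1) (Y-p.2)))
      = 2 * (∑ p ∈ B, M f g p.1 p.2 * M u v (X-1-p.1) (Y+1-p.2))
        - 2 * (∑ p ∈ B, M f g p.1 p.2 * M u v (X-p.1) (Y-p.2)) := by
    have : ∀ p : ℤ × ℤ, (M f g p.1 p.2 - M f g (p.2 + D) (p.1 - D)) *
        (M u v (X-1-p.1) (Y+1-p.2) - M u v (X-p.1) (Y-p.2))
        = M f g p.1 p.2 * M u v (X-1-p.1) (Y+1-p.2)
          - M f g p.1 p.2 * M u v (X-p.1) (Y-p.2)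
          - M f g (p.2 + D) (p.1 - D) * M u v (X-1-p.1) (Y+1-p.2)
          + M f g (p.2 + D) (p.1 - D) * M u v (X-p.1) (Y-p.2) := by
      intro p; ring
    rw [Finset.sum_congr rfl (fun p _ => this p)]
    rw [Finset.sum_add_distrib, Finset.sum_sub_distrib, Finset.sum_sub_distrib, r1, r2]
    ring
  -- identify with T's
  have hVfg : Vq (M f g) := M_Vq hzf hzg
  have hVuv : Vq (M u v) := M_Vq hzu hzv
  have b1 : T (M f g) (M u v) X Y = ∑ p ∈ B, M f g p.1 p.2 * M u v (X-p.1) (Y-p.2) := by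
    apply T_eq_box hVfg hVuv
    intro p hp
    simp only [hBdef, Finset.mem_product, Finset.mem_Icc] at hp ⊢
    omega
  have b2 : T (M f g) (M u v) (X-1) (Y+1) = ∑ p ∈ B, M f g p.1 p.2 * M u v (X-1-p.1) (Y+1-p.2) := by
    apply T_eq_box hVfg hVuv
    intro p hp
    simp only [hBdef, Finset.mem_product, Finset.mem_Icc] at hp ⊢
    omega
  rw [b1, b2]
  rw [expand] at hsum
  linarith

end step

section parts
variable {f g u v : ℤ → ℝ}

lemma T_symm (X Y : ℤ) : T (M f g) (M u v) X Y = T (M f g) (M u v) Y X := by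
  unfold T
  refine Finset.sum_nbij' Prod.swap Prod.swap ?_ ?_ (fun p _ => rfl) (fun p _ => rfl) ?_
  · intro p hp; simp only [Finset.mem_product, Finset.mem_Icc, Prod.swap] at hp ⊢; omega
  · intro p hp; simp only [Finset.mem_product, Finset.mem_Icc, Prod.swap] at hp ⊢; omega
  · rintro ⟨a, c⟩ _
    simp only [Prod.swap]
    rw [M_symm a c, M_symm (X - a) (Y - c)]

lemma T_MM (hf : Nn f) (hg : Nn g) (hu : Nn u) (hv : Nn v)
    (hzf : Zn f) (hzg : Zn g) (hzu : Zn u) (hzv : Zn v)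
    (hfg : LZ f g) (huv : LZ u v) :
    ∀ n : ℕ, ∀ X Y : ℤ, 0 ≤ Y → (n : ℤ) ≤ X - Y →
    T (M f g) (M u v) X Y ≤ T (M f g) (M u v) (X - n) (Y + n) := by
  intro n
  induction n using Nat.strong_induction_on with
  | _ n ih =>
    intro X Y hY hXY
    match n with
    | 0 => simp
    | (m+1) =>
      rcases le_or_gt (2*(m+1) : ℤ) (X - Y) with hc | hc
      · have s1 : T (M f g) (M u v) X Y ≤ T (M f g) (M u v) (X-1) (Y+1) :=
          T_step hf hg hu hv hzf hzg hzu hzv hfg huv hY (by push_cast at hc ⊢; omega)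
        have s2 := ih m (by omega) (X-1) (Y+1) (by omega) (by push_cast at hXY hc ⊢; omega)
        have e1 : X - 1 - m = X - (m+1 : ℕ) := by push_cast; ring
        have e2 : Y + 1 + m = Y + (m+1 : ℕ) := by push_cast; ring
        rw [e1, e2] at s2
        linarith
      · set n' : ℕ := (X - Y - (m+1)).toNat with hn'
        have hn'lt : n' < m + 1 := by push_cast at hXY hc ⊢; omega
        have := ih n' hn'lt X Y hY (by push_cast at hXY ⊢; omega)
        have heq : T (M f g) (M u v) (X - n') (Y + n') = T (M f g) (M u v) (X - (m+1:ℕ)) (Y + (m+1:ℕ)) := by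
          rw [T_symm]
          congr 1 <;> push_cast at hXY ⊢ <;> omega
        linarith [heq ▸ this]

lemma T_MJ (hfg : LZ f g) (hzu : Zn u) (hzv : Zn v) (huv : LZ u v)
    (hzf : Zn f) (hzg : Zn g)
    {X Y k : ℤ} (hk : 0 ≤ k) (hXY : k ≤ X - Y) :
    T (M f g) (J u v) X Y ≤ T (M f g) (J u v) (X - k) (Y + k) := by
  set B : Finset (ℤ × ℤ) := Finset.Icc (0:ℤ) (X + k) ×ˢ Finset.Icc (-k) (Y + k) with hBdef
  set B2 : Finset (ℤ × ℤ) := Finset.Icc (-k) X ×ˢ Finset.Icc (0:ℤ) (Y + 2*k) with hB2def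
  have b1 : T (M f g) (J u v) X Y = ∑ p ∈ B, M f g p.1 p.2 * J u v (X - p.1) (Y - p.2) := by
    apply T_eq_box (M_Vq hzf hzg) (J_Vq hzu hzv)
    intro p hp; simp only [hBdef, Finset.mem_product, Finset.mem_Icc] at hp ⊢; omega
  have b2 : T (M f g) (J u v) (X-k) (Y+k) = ∑ p ∈ B2, M f g p.1 p.2 * J u v (X - k - p.1) (Y + k - p.2) := by
    apply T_eq_box (M_Vq hzf hzg) (J_Vq hzu hzv)
    intro p hp; simp only [hB2def, Finset.mem_product, Finset.mem_Icc] at hp ⊢; omega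
  -- translate the RHS index
  have b3 : ∑ p ∈ B2, M f g p.1 p.2 * J u v (X - k - p.1) (Y + k - p.2)
      = ∑ p ∈ B, M f g (p.1 - k) (p.2 + k) * J u v (X - p.1) (Y - p.2) := by
    refine Finset.sum_nbij' (fun p => (p.1 + k, p.2 - k)) (fun p => (p.1 - k, p.2 + k)) ?_ ?_ ?_ ?_ ?_
    · intro p hp; simp only [hBdef, hB2def, Finset.mem_product, Finset.mem_Icc] at hp ⊢; omega
    · intro p hp; simp only [hBdef, hB2def, Finset.mem_product, Finset.mem_Icc] at hp ⊢; omega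
    · intro p _; simp
    · intro p _; simp
    · rintro ⟨a, c⟩ _
      simp only
      rw [show a + k - k = a by ring, show c - k + k = c by ring,
        show X - k - a = X - (a + k) by ring, show Y + k - c = Y - (c - k) by ring]
  rw [b1, b2, b3]
  apply Finset.sum_le_sum
  rintro ⟨a, c⟩ _
  simp only
  rcases le_or_gt (J u v (X - a) (Y - c)) 0 with hJ | hJ
  · have : J u v (X - a) (Y - c) = 0 := le_antisymm hJ (J_nonneg huv _ _)
    rw [this, mul_zero, mul_zero]
  · -- J ≠ 0 forces X - a < Y - c hence a - c > X - Y ≥ k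
    have hord : X - a < Y - c := by
      by_contra hcon
      rw [J_zero_of_le (by omega)] at hJ
      exact lt_irrefl _ hJ
    have hM : M f g a c ≤ M f g (a - k) (c + k) := by
      rcases le_or_gt c a with hs | hs
      · exact M_le_M hfg hs (by omega) (by omega) (by omega)
      · rw [M_symm a c]
        exact M_le_M hfg hs.le (by omega) (by omega) (by omega)
    exact mul_le_mul_of_nonneg_right hM hJ.le

lemma T_JM (hfg : LZ f g) (huv : LZ u v) (hzf : Zn f) (hzg : Zn g) (hzu : Zn u) (hzv : Zn v)
    {X Y k : ℤ} (hk : 0 ≤ k) (hXY : k ≤ X - Y) :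
    T (J f g) (M u v) X Y ≤ T (J f g) (M u v) (X - k) (Y + k) := by
  set B : Finset (ℤ × ℤ) := Finset.Icc (0:ℤ) X ×ˢ Finset.Icc (0:ℤ) (Y + k) with hBdef
  have b1 : T (J f g) (M u v) X Y = ∑ p ∈ B, J f g p.1 p.2 * M u v (X - p.1) (Y - p.2) := by
    apply T_eq_box (J_Vq hzf hzg) (M_Vq hzu hzv)
    intro p hp; simp only [hBdef, Finset.mem_product, Finset.mem_Icc] at hp ⊢; omega
  have b2 : T (J f g) (M u v) (X-k) (Y+k) = ∑ p ∈ B, J f g p.1 p.2 * M u v (X - k - p.1) (Y + k - p.2) := by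
    apply T_eq_box (J_Vq hzf hzg) (M_Vq hzu hzv)
    intro p hp; simp only [hBdef, Finset.mem_product, Finset.mem_Icc] at hp ⊢; omega
  rw [b1, b2]
  apply Finset.sum_le_sum
  rintro ⟨a, c⟩ _
  simp only
  rcases le_or_gt (J f g a c) 0 with hJ | hJ
  · have : J f g a c = 0 := le_antisymm hJ (J_nonneg hfg _ _)
    rw [this, zero_mul, zero_mul]
  · have hord : a < c := by
      by_contra hcon
      rw [J_zero_of_le (by omega)] at hJ
      exact lt_irrefl _ hJ
    have hM : M u v (X - a) (Y - c) ≤ M u v (X - k - a) (Y + k - c) := by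
      have h0 : Y - c ≤ X - a := by omega
      exact M_le_M huv h0 (by ring) (by omega) (by omega)
    exact mul_le_mul_of_nonneg_left hM hJ.le

lemma T_JJ_zero (hfg : LZ f g) (huv : LZ u v) {X Y : ℤ} (hXY : Y ≤ X) :
    T (J f g) (J u v) X Y = 0 := by
  apply Finset.sum_eq_zero
  rintro ⟨a, c⟩ _
  simp only
  rcases le_or_gt c a with h | h
  · rw [J_zero_of_le h, zero_mul]
  · rw [J_zero_of_le (f := u) (g := v) (by omega), mul_zero]

lemma T_JJ_nonneg (hfg : LZ f g) (huv : LZ u v) (X Y : ℤ) :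
    0 ≤ T (J f g) (J u v) X Y :=
  Finset.sum_nonneg fun p _ => mul_nonneg (J_nonneg hfg _ _) (J_nonneg huv _ _)

end parts

section key
variable {f g u v : ℤ → ℝ}

lemma conv_nonneg (hf : Nn f) (hF : Nn u) (z : ℤ) : 0 ≤ convZ f u z :=
  Finset.sum_nonneg fun k _ => mul_nonneg (hf _) (hF _)

lemma conv_Zn : Zn (convZ f u) := by
  intro z hz
  unfold convZ
  rw [Finset.Icc_eq_empty (by omega), Finset.sum_empty]

lemma conv_expand (X Y : ℤ) :
    convZ f u X * convZ g v Y
      = T (M f g) (M u v) X Y + T (M f g) (J u v) X Y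
        + T (J f g) (M u v) X Y + T (J f g) (J u v) X Y := by
  unfold convZ
  rw [Finset.sum_mul_sum]
  have lhs : ∑ a ∈ Finset.Icc (0:ℤ) X, ∑ c ∈ Finset.Icc (0:ℤ) Y,
      (f a * u (X - a)) * (g c * v (Y - c))
      = ∑ p ∈ Finset.Icc (0:ℤ) X ×ˢ Finset.Icc (0:ℤ) Y,
        (M f g p.1 p.2 + J f g p.1 p.2) * (M u v (X - p.1) (Y - p.2) + J u v (X - p.1) (Y - p.2)) := by
    rw [Finset.sum_product]
    apply Finset.sum_congr rfl
    intro a _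
    apply Finset.sum_congr rfl
    intro c _
    rw [← MJ_eq, ← MJ_eq]
    ring
  rw [lhs]
  unfold T
  rw [← Finset.sum_add_distrib, ← Finset.sum_add_distrib, ← Finset.sum_add_distrib]
  apply Finset.sum_congr rfl
  intro p _
  ring

/-- Closure of the shifted LR order under convolution. -/
lemma LZ_conv (hf : Nn f) (hg : Nn g) (hu : Nn u) (hv : Nn v)
    (hzf : Zn f) (hzg : Zn g) (hzu : Zn u) (hzv : Zn v)
    (hfg : LZ f g) (huv : LZ u v) : LZ (convZ f u) (convZ g v) := by
  intro X Y k hk hXY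
  rcases lt_or_ge Y 0 with hY | hY
  · rw [conv_Zn Y hY, mul_zero]
    exact mul_nonneg (conv_nonneg hf hu _) (conv_nonneg hg hv _)
  · rw [conv_expand, conv_expand]
    have hMM := T_MM hf hg hu hv hzf hzg hzu hzv hfg huv k.toNat X Y hY (by omega)
    rw [show ((k.toNat : ℤ)) = k by omega] at hMM
    have hMJ := T_MJ (u := u) (v := v) hfg hzu hzv huv hzf hzg hk hXY
    have hJM := T_JM (u := u) (v := v) hfg huv hzf hzg hzu hzv hk hXY
    have hJJ1 : T (J f g) (J u v) X Y = 0 := T_JJ_zero hfg huv (by omega)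
    have hJJ2 := T_JJ_nonneg (u := u) (v := v) hfg huv (X - k) (Y + k)
    linarith

end key

noncomputable def zext (p : ℕ → ℝ) : ℤ → ℝ := fun x => if 0 ≤ x then p x.toNat else 0

lemma zext_coe (p : ℕ → ℝ) (n : ℕ) : zext p (n : ℤ) = p n := by
  simp [zext]

lemma zext_Nn {p : ℕ → ℝ} (hp : ∀ x, 0 ≤ p x) : Nn (zext p) := by
  intro x; unfold zext; split <;> simp [hp]

lemma zext_Zn (p : ℕ → ℝ) : Zn (zext p) := by
  intro x hx; unfold zext; rw [if_neg (by omega)]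

lemma LZ_of_LRup {p q : ℕ → ℝ} (hp : ∀ x, 0 ≤ p x) (hq : ∀ x, 0 ≤ q x)
    (h : LRup p q) : LZ (zext p) (zext q) := by
  intro x y k hk hxy
  rcases lt_or_ge y 0 with hy | hy
  · rw [zext_Zn q y hy, mul_zero]
    exact mul_nonneg (zext_Nn hp _) (zext_Nn hq _)
  · obtain ⟨i, rfl⟩ := Int.eq_ofNat_of_zero_le hy
    obtain ⟨kk, rfl⟩ := Int.eq_ofNat_of_zero_le hk
    obtain ⟨l, hl⟩ := Int.eq_ofNat_of_zero_le (show (0:ℤ) ≤ x - i - kk by omega)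
    have hx : x = ((i + kk + l : ℕ) : ℤ) := by push_cast; omega
    rw [hx, show ((i + kk + l : ℕ) : ℤ) - (kk:ℤ) = ((i + l : ℕ) : ℤ) by push_cast; ring,
      show ((i:ℤ) + (kk:ℤ)) = ((i + kk : ℕ) : ℤ) by push_cast; ring,
      zext_coe, zext_coe, zext_coe, zext_coe]
    exact h i kk l

variable {ι : Type*} [Fintype ι] [DecidableEq ι]

noncomputable def NN (b : ℕ) (m : ι → ℕ → ℝ) (s : Finset ι) (z : ℤ) : ℝ :=
  ∑ y ∈ Fintype.piFinset (fun i => if i ∈ s then Finset.range (b+1) else {0}),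
    if (∑ i, (y i : ℤ)) ≤ z then ∏ i ∈ s, m i (y i) else 0

lemma NN_nonneg {b : ℕ} {m : ι → ℕ → ℝ} (hm : ∀ i x, 0 ≤ m i x) (s : Finset ι) (z : ℤ) :
    0 ≤ NN b m s z := by
  apply Finset.sum_nonneg
  intro y _
  split
  · exact Finset.prod_nonneg fun i _ => hm i _
  · exact le_refl 0

lemma NN_neg {b : ℕ} {m : ι → ℕ → ℝ} (s : Finset ι) {z : ℤ} (hz : z < 0) :
    NN b m s z = 0 := by
  apply Finset.sum_eq_zero
  intro y _
  rw [if_neg]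
  have : (0:ℤ) ≤ ∑ i, (y i : ℤ) := Finset.sum_nonneg fun i _ => by positivity
  omega

lemma NN_empty (b : ℕ) (m : ι → ℕ → ℝ) (z : ℤ) :
    NN b m ∅ z = if 0 ≤ z then 1 else 0 := by
  unfold NN
  have hpi : Fintype.piFinset (fun i : ι => if i ∈ (∅ : Finset ι) then Finset.range (b+1) else {0})
      = {fun _ => 0} := by
    ext y
    simp [Fintype.mem_piFinset, funext_iff]
  rw [hpi, Finset.sum_singleton]
  simp

lemma NN_insert {b : ℕ} {m : ι → ℕ → ℝ} {s : Finset ι} {j : ι} (hj : j ∉ s) {z : ℤ} (hz : z ≤ (b:ℤ)) :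
    NN b m (insert j s) z = ∑ k ∈ Finset.Icc (0:ℤ) z, zext (m j) k * NN b m s (z - k) := by
  classical
  set t : ι → Finset ℕ := fun i => if i ∈ s then Finset.range (b+1) else {0} with ht
  set t' : ι → Finset ℕ := fun i => if i ∈ insert j s then Finset.range (b+1) else {0} with ht'
  have step1 : NN b m (insert j s) z
      = ∑ q ∈ Finset.range (b+1) ×ˢ Fintype.piFinset t,
          (if ((q.1:ℤ) + ∑ i, (q.2 i : ℤ)) ≤ z then m j q.1 * ∏ i ∈ s, m i (q.2 i) else 0) := by
    unfold NN
    refine Finset.sum_nbij' (fun y => (y j, Function.update y j 0))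
      (fun q => Function.update q.2 j q.1) ?_ ?_ ?_ ?_ ?_
    · intro y hy
      simp only [Fintype.mem_piFinset, ht'] at hy
      simp only [Finset.mem_product, Fintype.mem_piFinset, ht]
      constructor
      · have := hy j
        rwa [if_pos (Finset.mem_insert_self j s)] at this
      · intro i
        by_cases hij : i = j
        · subst hij
          rw [Function.update_self, if_neg hj]
          exact Finset.mem_singleton_self 0
        · rw [Function.update_of_ne hij]
          have := hy i
          by_cases his : i ∈ s
          · simp only [if_pos (Finset.mem_insert_of_mem his)] at this
            simpa [his] using this
          · simp only [if_neg (by simp [hij, his] : ¬ (i ∈ insert j s))] at this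
            simpa [his] using this
    · intro q hq
      simp only [Finset.mem_product, Fintype.mem_piFinset, ht] at hq
      simp only [Fintype.mem_piFinset, ht']
      intro i
      by_cases hij : i = j
      · subst hij
        rw [Function.update_self, if_pos (Finset.mem_insert_self i s)]
        exact hq.1
      · rw [Function.update_of_ne hij]
        have := hq.2 i
        by_cases his : i ∈ s
        · simp only [if_pos his] at this
          simpa [Finset.mem_insert, his] using this
        · simp only [if_neg his] at this
          simpa [Finset.mem_insert, hij, his] using this
    · intro y hy
      simp only
      rw [Function.update_idem]
      exact Function.update_eq_self j y
    · intro q hq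
      simp only [Finset.mem_product, Fintype.mem_piFinset, ht] at hq
      have hq2 : q.2 j = 0 := by
        have := hq.2 j
        rwa [if_neg hj, Finset.mem_singleton] at this
      ext
      · simp
      · simp only [Function.update_idem]
        rw [← hq2, Function.update_eq_self]
    · intro y hy
      simp only [Fintype.mem_piFinset, ht'] at hy
      have hsum : (y j : ℤ) + ∑ i, ((Function.update y j 0 i : ℕ) : ℤ) = ∑ i, (y i : ℤ) := by
        have hupd : (fun i => ((Function.update y j 0 i : ℕ) : ℤ))
            = Function.update (fun i => (y i : ℤ)) j 0 := by
          funext i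
          by_cases hij : i = j
          · subst hij; simp
          · simp [Function.update_of_ne hij]
        rw [hupd, Finset.sum_update_of_mem (Finset.mem_univ j)]
        rw [Finset.sum_eq_sum_sdiff_singleton_add (Finset.mem_univ j) (fun i => ((y i : ℕ) : ℤ))]
        ring
      have hprod : ∏ i ∈ insert j s, m i (y i) = m j (y j) * ∏ i ∈ s, m i (Function.update y j 0 i) := by
        rw [Finset.prod_insert hj]
        congr 1
        apply Finset.prod_congr rfl
        intro i his
        have hij : i ≠ j := by rintro rfl; exact hj his
        rw [Function.update_of_ne hij]
      simp only
      rw [hprod]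
      congr 1
      · rw [hsum]
  rw [step1, Finset.sum_product]
  have step2 : ∀ k ∈ Finset.range (b+1),
      (∑ y ∈ Fintype.piFinset t, if ((k:ℤ) + ∑ i, (y i : ℤ)) ≤ z then m j k * ∏ i ∈ s, m i (y i) else 0)
      = m j k * NN b m s (z - k) := by
    intro k _
    unfold NN
    rw [Finset.mul_sum]
    apply Finset.sum_congr rfl
    intro y _
    rw [mul_ite, mul_zero]
    congr 1
    simp only [eq_iff_iff]
    omega
  rw [Finset.sum_congr rfl step2]
  -- now reindex range (b+1) ↔ Icc 0 z
  rcases lt_or_ge z 0 with hz0 | hz0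
  · rw [Finset.Icc_eq_empty (by omega), Finset.sum_empty]
    apply Finset.sum_eq_zero
    intro k _
    rw [NN_neg s (by omega), mul_zero]
  · have hsub : Finset.range (z.toNat + 1) ⊆ Finset.range (b+1) := by
      apply Finset.range_subset_range.2; omega
    rw [← Finset.sum_subset hsub ?vanish]
    case vanish =>
      intro k _ hk
      simp only [Finset.mem_range] at hk
      rw [NN_neg s (by omega), mul_zero]
    refine Finset.sum_nbij' (fun k => (k:ℤ)) (fun k' => k'.toNat) ?_ ?_ ?_ ?_ ?_
    · intro k hk; simp only [Finset.mem_range] at hk; simp only [Finset.mem_Icc]; omega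
    · intro k' hk'; simp only [Finset.mem_Icc] at hk'; simp only [Finset.mem_range]; omega
    · intro k _; simp
    · intro k' hk'; simp only [Finset.mem_Icc] at hk'
      show ((k'.toNat : ℕ) : ℤ) = k'
      omega
    · intro k _
      rw [zext_coe]


/-- main induction over the coordinates -/
lemma NN_LZ (b : ℕ) (m₁ m₂ : ι → ℕ → ℝ)
    (h₁ : ∀ i x, 0 ≤ m₁ i x) (h₂ : ∀ i x, 0 ≤ m₂ i x)
    (h : ∀ i, LRup (m₁ i) (m₂ i)) (s : Finset ι) :
    ∃ F₁ F₂ : ℤ → ℝ, Nn F₁ ∧ Nn F₂ ∧ Zn F₁ ∧ Zn F₂ ∧ LZ F₁ F₂ ∧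
      (∀ z : ℤ, z ≤ (b:ℤ) → NN b m₁ s z = F₁ z ∧ NN b m₂ s z = F₂ z) := by
  classical
  induction s using Finset.induction_on with
  | empty =>
    refine ⟨fun z => if 0 ≤ z then 1 else 0, fun z => if 0 ≤ z then 1 else 0, ?_, ?_, ?_, ?_, ?_, ?_⟩
    · intro z; dsimp only; split <;> norm_num
    · intro z; dsimp only; split <;> norm_num
    · intro z hz; dsimp only; rw [if_neg (by omega)]
    · intro z hz; dsimp only; rw [if_neg (by omega)]
    · intro x y k hk hxy
      dsimp only
      by_cases hy : 0 ≤ y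
      · rw [if_pos hy, if_pos (by omega : (0:ℤ) ≤ x), if_pos (by omega : (0:ℤ) ≤ x - k),
          if_pos (by omega : (0:ℤ) ≤ y + k)]
      · rw [if_neg hy, mul_zero]
        have : (0:ℝ) ≤ (if (0:ℤ) ≤ x - k then (1:ℝ) else 0) := by split <;> norm_num
        have : (0:ℝ) ≤ (if (0:ℤ) ≤ y + k then (1:ℝ) else 0) := by split <;> norm_num
        positivity
    · intro z _; rw [NN_empty, NN_empty]; exact ⟨rfl, rfl⟩
  | @insert j s hj ih =>
    obtain ⟨F₁, F₂, hF₁, hF₂, hZ₁, hZ₂, hLZ, heq⟩ := ih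
    refine ⟨convZ (zext (m₁ j)) F₁, convZ (zext (m₂ j)) F₂,
      conv_nonneg (zext_Nn (h₁ j)) hF₁, conv_nonneg (zext_Nn (h₂ j)) hF₂,
      conv_Zn, conv_Zn, ?_, ?_⟩
    · exact LZ_conv (zext_Nn (h₁ j)) (zext_Nn (h₂ j)) hF₁ hF₂
        (zext_Zn _) (zext_Zn _) hZ₁ hZ₂
        (LZ_of_LRup (h₁ j) (h₂ j) (h j)) hLZ
    · intro z hz
      constructor
      · rw [NN_insert hj hz]
        unfold convZ
        apply Finset.sum_congr rfl
        intro k hk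
        simp only [Finset.mem_Icc] at hk
        rw [(heq (z - k) (by omega)).1]
      · rw [NN_insert hj hz]
        unfold convZ
        apply Finset.sum_congr rfl
        intro k hk
        simp only [Finset.mem_Icc] at hk
        rw [(heq (z - k) (by omega)).2]


lemma Rnum_eq_NN (b : ℕ) (m : ι → ℕ → ℝ) (x : ℕ) :
    Rnum b m x = NN b m Finset.univ ((b:ℤ) - (x:ℤ)) := by
  unfold Rnum NN
  rw [tsum_eq_sum (s := Fintype.piFinset (fun i : ι => if i ∈ Finset.univ then Finset.range (b+1) else {0})) ?van]
  case van =>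
    intro y hy
    simp only [Fintype.mem_piFinset, Finset.mem_univ, if_true, Finset.mem_range] at hy
    push_neg at hy
    obtain ⟨i, hi⟩ := hy
    rw [if_neg]
    intro hcon
    have : y i ≤ ∑ i', y i' := Finset.single_le_sum (fun _ _ => Nat.zero_le _) (Finset.mem_univ i)
    omega
  apply Finset.sum_congr rfl
  intro y _
  have hc : ((∑ i, y i : ℕ) : ℤ) = ∑ i, (y i : ℤ) := by push_cast; rfl
  refine if_congr ?_ ?_ rfl
  · rw [← hc]; omega
  · exact (Finset.prod_congr rfl fun i _ => rfl)

lemma Rnum_nonneg (b : ℕ) {m : ι → ℕ → ℝ} (hm : ∀ i x, 0 ≤ m i x) (x : ℕ) :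
    0 ≤ Rnum b m x := by
  rw [Rnum_eq_NN]
  exact NN_nonneg hm _ _

lemma Rnum_key (b : ℕ) (m₁ m₂ : ι → ℕ → ℝ)
    (h₁ : ∀ i x, 0 ≤ m₁ i x) (h₂ : ∀ i x, 0 ≤ m₂ i x)
    (h : ∀ i, LRup (m₁ i) (m₂ i)) (i k l : ℕ) :
    Rnum b m₂ (i+k+l) * Rnum b m₁ i ≤ Rnum b m₂ (i+l) * Rnum b m₁ (i+k) := by
  obtain ⟨F₁, F₂, hF₁, hF₂, hZ₁, hZ₂, hLZ, heq⟩ := NN_LZ b m₁ m₂ h₁ h₂ h Finset.univ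
  have e1 : Rnum b m₁ i = F₁ ((b:ℤ) - i) := by
    rw [Rnum_eq_NN, (heq _ (by omega)).1]
  have e2 : Rnum b m₁ (i+k) = F₁ ((b:ℤ) - i - k) := by
    rw [Rnum_eq_NN, (heq _ (by push_cast; omega)).1]
    congr 1; push_cast; ring
  have e3 : Rnum b m₂ (i+k+l) = F₂ ((b:ℤ) - i - k - l) := by
    rw [Rnum_eq_NN, (heq _ (by push_cast; omega)).2]
    congr 1; push_cast; ring
  have e4 : Rnum b m₂ (i+l) = F₂ ((b:ℤ) - i - l) := by
    rw [Rnum_eq_NN, (heq _ (by push_cast; omega)).2]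
    congr 1; push_cast; ring
  rw [e1, e2, e3, e4]
  have := hLZ ((b:ℤ) - i) ((b:ℤ) - i - k - l) k (by omega) (by omega)
  rw [show (b:ℤ) - i - k - l + k = (b:ℤ) - i - l by ring] at this
  linarith [this]


end RopAux

theorem Rop_antitone {ι : Type*} [Fintype ι] (b c : ℕ) (m₁ m₂ : ι → ℕ → ℝ)
    (h₁ : ∀ i, IsDist (m₁ i)) (h₂ : ∀ i, IsDist (m₂ i))
    (h₁0 : ∀ i, 0 < m₁ i 0) (h₂0 : ∀ i, 0 < m₂ i 0)
    (h : ∀ i, LRup (m₁ i) (m₂ i)) :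
    LRup (Rop b c m₂) (Rop b c m₁) := by
  classical
  intro i k l
  have hm₁ : ∀ j x, 0 ≤ m₁ j x := fun j => (h₁ j).1
  have hm₂ : ∀ j x, 0 ≤ m₂ j x := fun j => (h₂ j).1
  set A : ℕ → ℝ := fun x => if x ≤ c then Rnum b m₂ x else 0 with hA
  set B : ℕ → ℝ := fun x => if x ≤ c then Rnum b m₁ x else 0 with hB
  have hAn : ∀ x, 0 ≤ A x := by
    intro x; rw [hA]; dsimp only; split
    · exact RopAux.Rnum_nonneg b hm₂ x
    · exact le_refl 0
  have hBn : ∀ x, 0 ≤ B x := by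
    intro x; rw [hB]; dsimp only; split
    · exact RopAux.Rnum_nonneg b hm₁ x
    · exact le_refl 0
  have key : A (i+k+l) * B i ≤ A (i+l) * B (i+k) := by
    by_cases hc : i + k + l ≤ c
    · rw [hA, hB]; dsimp only
      rw [if_pos hc, if_pos (by omega), if_pos (by omega), if_pos (by omega)]
      exact RopAux.Rnum_key b m₁ m₂ hm₁ hm₂ h i k l
    · have : A (i+k+l) = 0 := by rw [hA]; dsimp only; rw [if_neg hc]
      rw [this, zero_mul]
      exact mul_nonneg (hAn _) (hBn _)
  -- assemble
  unfold Rop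
  set Z₂ := ∑ t ∈ Finset.range (c + 1), Rnum b m₂ t with hZ₂
  set Z₁ := ∑ t ∈ Finset.range (c + 1), Rnum b m₁ t with hZ₁
  have hZ₂n : 0 ≤ Z₂ := Finset.sum_nonneg fun t _ => RopAux.Rnum_nonneg b hm₂ t
  have hZ₁n : 0 ≤ Z₁ := Finset.sum_nonneg fun t _ => RopAux.Rnum_nonneg b hm₁ t
  show A (i+k+l) / Z₂ * (B i / Z₁) ≤ A (i+l) / Z₂ * (B (i+k) / Z₁)
  rw [div_mul_div_comm, div_mul_div_comm]
  rcases eq_or_lt_of_le (mul_nonneg hZ₂n hZ₁n) with hz | hz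
  · rw [← hz, div_zero, div_zero]
  · exact (div_le_div_iff_of_pos_right hz).2 key
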